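/- Let Γ be a finite group and χ a complex character of Γ. Define the class function ψ̂^k(χ) on Γ by ψ̂^k(χ)(γ) = Σ_{τ ∈ Γ, τ^k = γ} χ(τ). Then for every character θ of Γ, the inner product ⟨ψ̂^k(χ), θ⟩ equals ⟨χ, ψ^k(θ)⟩, where ψ^k(θ)(τ) = θ(τ^k) is the k-th Adams operation. -/
import Mathlib

open Finset

/-- Let `Γ` be a finite group, `χ` the character of a complex
representation `V` of `Γ`, and define `ψ̂ᵏ(χ)(γ) = ∑_{τ^k = γ} χ(τ)`. Then for every
character `θ` of a complex representation `W`, we have `⟨ψ̂ᵏ(χ), θ⟩ = ⟨χ, ψᵏ(θ)⟩`, where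
`ψᵏ(θ)(τ) = θ(τ^k)` is the `k`-th Adams operation and `⟨α, β⟩ = |Γ|⁻¹ ∑ γ, α(γ)·conj(β(γ))`
is the standard inner product of class functions. -/
theorem stmt5 (Γ : Type) [Group Γ] [Fintype Γ] [DecidableEq Γ] (k : ℕ)
    (V W : FDRep ℂ Γ) :
    (Fintype.card Γ : ℂ)⁻¹ *
        ∑ γ : Γ, (∑ τ ∈ univ.filter (fun τ => τ ^ k = γ), V.character τ) *
          (starRingEnd ℂ) (W.character γ)
      = (Fintype.card Γ : ℂ)⁻¹ *
        ∑ τ : Γ, V.character τ * (starRingEnd ℂ) (W.character (τ ^ k)) := by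
  congr 1
  calc ∑ γ : Γ, (∑ τ ∈ univ.filter (fun τ => τ ^ k = γ), V.character τ) *
          (starRingEnd ℂ) (W.character γ)
      = ∑ γ : Γ, ∑ τ ∈ univ.filter (fun τ => τ ^ k = γ),
          V.character τ * (starRingEnd ℂ) (W.character (τ ^ k)) := by
        refine Finset.sum_congr rfl fun γ _ => ?_
        rw [Finset.sum_mul]
        refine Finset.sum_congr rfl fun τ hτ => ?_
        rw [(Finset.mem_filter.mp hτ).2]
    _ = ∑ τ : Γ, V.character τ * (starRingEnd ℂ) (W.character (τ ^ k)) :=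
        Finset.sum_fiberwise _ _ _
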